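/- Let m, m', m~, m^ : ℕ → ℝ satisfy the Hosoya recurrence system with parameters a = 0, b = 1, c = 0 (the meta-hexagonal cactus case). Then in ℝ[[X]] one has (1 − 13·X + 10·X²) · (∑_{n≥0} m(n)·Xⁿ) = 1 + 5·X; that is, the generating function of the number of matchings of meta-hexagonal cacti is M(x) = (1 + 5x)/(1 − 13x + 10x²). -/

import Mathlib

/-- Generating function of the number of matchings of meta-hexagonal cacti. -/
theorem hosoya_genfun_meta
    (m m' mt mh : ℕ → ℝ)
    (hm0 : m 0 = 1) (hm1 : m 1 = 18)
    (hm'0 : m' 0 = 8) (hmt0 : mt 0 = 8) (hmh0 : mh 0 = 8)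
    (hm : ∀ n, 2 ≤ n →
      m n = 8 * m (n - 1) + 10 * (0 : ℝ) * m' (n - 2) + 10 * (1 : ℝ) * mt (n - 2)
        + 10 * (0 : ℝ) * mh (n - 2))
    (hm' : ∀ n, 1 ≤ n →
      m' n = 5 * m n + 3 * (0 : ℝ) * m' (n - 1) + 3 * (1 : ℝ) * mt (n - 1)
        + 3 * (0 : ℝ) * mh (n - 1))
    (hmt : ∀ n, 1 ≤ n →
      mt n = 3 * m n + 5 * (0 : ℝ) * m' (n - 1) + 5 * (1 : ℝ) * mt (n - 1)
        + 5 * (0 : ℝ) * mh (n - 1))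
    (hmh : ∀ n, 1 ≤ n →
      mh n = 4 * m n + 4 * (0 : ℝ) * m' (n - 1) + 4 * (1 : ℝ) * mt (n - 1)
        + 4 * (0 : ℝ) * mh (n - 1)) :
    (1 - (13 : PowerSeries ℝ) * PowerSeries.X + (10 : PowerSeries ℝ) * PowerSeries.X ^ 2) * PowerSeries.mk m
      = 1 + (5 : PowerSeries ℝ) * PowerSeries.X := by
  have h1 : ∀ n : ℕ, m (n + 2) = 8 * m (n + 1) + 10 * mt n := by
    intro n
    have := hm (n + 2) (by omega)
    simpa using this
  have h2 : ∀ n : ℕ, mt (n + 1) = 3 * m (n + 1) + 5 * mt n := by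
    intro n
    have := hmt (n + 1) (by omega)
    simpa using this
  have key : ∀ n : ℕ, m (n + 2) = 13 * m (n + 1) - 10 * m n := by
    intro n
    cases n with
    | zero =>
        have := h1 0
        rw [hm1, hmt0] at this
        rw [this, hm1, hm0]; ring
    | succ k =>
        have e1 := h1 (k + 1)
        have e2 := h2 k
        have e0 := h1 k
        rw [e2] at e1
        rw [e1]
        have : (10:ℝ) * mt k = m (k + 2) - 8 * m (k + 1) := by rw [e0]; ring
        nlinarith [this]
  ext n
  have hco : ∀ k : ℕ, (PowerSeries.coeff k)
      ((1 - (13 : PowerSeries ℝ) * PowerSeries.X + (10 : PowerSeries ℝ) * PowerSeries.X ^ 2) * PowerSeries.mk m)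
      = (PowerSeries.coeff k) (PowerSeries.mk m)
        - 13 * (PowerSeries.coeff k) (PowerSeries.X * PowerSeries.mk m)
        + 10 * (PowerSeries.coeff k) (PowerSeries.X ^ 2 * PowerSeries.mk m) := by
    intro k
    have : (1 - (13 : PowerSeries ℝ) * PowerSeries.X + (10 : PowerSeries ℝ) * PowerSeries.X ^ 2) * PowerSeries.mk m
        = PowerSeries.mk m - (PowerSeries.C 13) * (PowerSeries.X * PowerSeries.mk m)
          + (PowerSeries.C 10) * (PowerSeries.X ^ 2 * PowerSeries.mk m) := by
      push_cast
      ring_nf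
      simp [PowerSeries.C_eq_algebraMap, map_ofNat]
    rw [this]
    simp
  rw [hco]
  match n with
  | 0 => simp [hm0]
  | 1 =>
      have h5 : ((5:PowerSeries ℝ)) = PowerSeries.C 5 := by simp [map_ofNat]
      simp [PowerSeries.coeff_X_pow_mul', hm1, hm0, pow_one, h5]
      norm_num
  | (k+2) =>
      have hX : (PowerSeries.coeff (k+2)) (PowerSeries.X * PowerSeries.mk m) = m (k+1) := by
        rw [← pow_one (PowerSeries.X : PowerSeries ℝ), PowerSeries.coeff_X_pow_mul']
        simp
      have hX2 : (PowerSeries.coeff (k+2)) (PowerSeries.X ^ 2 * PowerSeries.mk m) = m k := by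
        rw [PowerSeries.coeff_X_pow_mul']
        simp
      rw [hX, hX2]
      simp only [PowerSeries.coeff_mk]
      rw [key k]
      have : ((k:ℕ)+2) ≠ 0 := by omega
      have h5 : ((5:PowerSeries ℝ)) = PowerSeries.C 5 := by simp [map_ofNat]
      simp [PowerSeries.coeff_one, h5, PowerSeries.coeff_C_mul, PowerSeries.coeff_X]
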